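/- arXiv:0709.3939 — 2 statements merged into one kernel-verified Lean document; each statement's English description precedes it below -/
import Mathlib

section
/- If S is a good potential on a quiver Q (every arrow of Q appears in at least two terms of S and no path of length two appears in two distinct terms of S), then for every arrow a, the cyclic derivative ∂S/∂a is a linear combination of at least two paths which start with pairwise distinct arrows. -/
/-- A quiver given by a vertex set, an arrow set and source/target maps. -/
structure Quiv where
  V : Type
  E : Type
  s : E → V
  t : E → V

namespace Quiv

/-- A path `a₁ a₂ ⋯ aₙ`, written with the composition-of-functions convention,
is a list of arrows such that the source of each arrow is the target of the next one. -/
def IsPath (q : Quiv) : List q.E → Prop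
  | [] => True
  | [_] => True
  | a :: b :: l => q.s a = q.t b ∧ IsPath q (b :: l)

variable (q : Quiv)

/-- The source of a (nonempty) path. -/
def pSrc (l : List q.E) : Option q.V := l.getLast?.map q.s

/-- The target of a (nonempty) path. -/
def pTgt (l : List q.E) : Option q.V := l.head?.map q.t

/-- A cycle is a nonempty path whose source equals its target. -/
def IsCycle (l : List q.E) : Prop := l ≠ [] ∧ q.IsPath l ∧ q.pSrc l = q.pTgt l

variable (K : Type) [Field K]

open Classical in
/-- The cyclic derivative of a single cycle `a₁ ⋯ aₙ` with respect to an arrow `x`: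
`∑ₖ δ(x, aₖ) • a_{k+1} ⋯ aₙ a₁ ⋯ a_{k-1}`, as an element of the vector space
spanned by paths. -/
noncomputable def cycDerList (x : q.E) (l : List q.E) : List q.E →₀ K :=
  ∑ k ∈ Finset.range l.length,
    if l[k]? = some x then Finsupp.single (l.drop (k + 1) ++ l.take k) 1 else 0

/-- The cyclic derivative of a potential (a linear combination of cycles)
with respect to an arrow `x`, extended linearly. -/
noncomputable def cycDer (x : q.E) (S : List q.E →₀ K) : List q.E →₀ K :=
  S.sum fun l c => c • q.cycDerList K x l

/-- Two potentials are cyclically equivalent if their difference lies in the span of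
the elements `a₁ ⋯ a_{n-1} aₙ - a₂ ⋯ aₙ a₁` for cycles `a₁ ⋯ aₙ`. -/
def CycEquiv (S S' : List q.E →₀ K) : Prop :=
  S - S' ∈ Submodule.span K
    {x : List q.E →₀ K | ∃ l : List q.E, q.IsCycle l ∧
      x = Finsupp.single l 1 - Finsupp.single (l.rotate 1) 1}


/-- The cyclically consecutive pairs of arrows of a cycle `a₁ ⋯ aₙ`:
`(a₁,a₂), …, (a_{n-1},aₙ), (aₙ,a₁)`; these record its subpaths of length two. -/
def cycPairs (l : List q.E) : List (q.E × q.E) := l.zip (l.rotate 1)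

open Classical in
/-- A potential `S` is good if it is a linear combination of cycles, each arrow of the quiver
appears at least twice among its terms, and no subpath of length two appears twice. -/
def Good (S : List q.E →₀ K) : Prop :=
  (∀ l ∈ S.support, q.IsCycle l) ∧
  (∀ e : q.E, 2 ≤ ∑ l ∈ S.support, l.count e) ∧
  (∀ p : q.E × q.E, (∑ l ∈ S.support, (q.cycPairs l).count p) ≤ 1)

end Quiv

section Aux
open Quiv

variable {q : Quiv} {K : Type} [Field K]

lemma count_filter_range {α : Type*} [DecidableEq α] (l : List α) (a : α) :
    ((Finset.range l.length).filter fun k => l[k]? = some a).card = l.count a := by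
  induction l with
  | nil => simp
  | cons x l ih =>
    rw [Finset.card_filter] at *
    rw [List.length_cons, Finset.sum_range_succ']
    simp only [List.getElem?_cons_succ, List.getElem?_cons_zero, List.count_cons]
    rw [ih]
    by_cases h : x = a <;> simp [h]

lemma count_beq_congr {α : Type*} {i1 i2 : BEq α} [@LawfulBEq α i1] [@LawfulBEq α i2]
    (a : α) (l : List α) : @List.count α i1 a l = @List.count α i2 a l := by
  induction l with
  | nil => rfl
  | cons x l ih =>
    rw [@List.count_cons α i1, @List.count_cons α i2, ih]
    by_cases h : x = a
    · subst h; simp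
    · simp [h, @beq_eq_false_iff_ne α i1 _ _ _, @beq_eq_false_iff_ne α i2 _ _ _]

lemma two_le_length_of_cycle (hNoLoops : ∀ e : q.E, q.s e ≠ q.t e)
    {l : List q.E} (hl : q.IsCycle l) : 2 ≤ l.length := by
  obtain ⟨hne, -, hst⟩ := hl
  match l with
  | [] => exact absurd rfl hne
  | [e] =>
    simp only [Quiv.pSrc, Quiv.pTgt, List.getLast?_singleton, List.head?_cons,
      Option.map_some] at hst
    exact absurd (Option.some_injective _ hst) (hNoLoops e)
  | a :: b :: t => simp

lemma head?_cder {l : List q.E} {k : ℕ} (h2 : 2 ≤ l.length) (hk : k < l.length) :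
    (l.drop (k+1) ++ l.take k).head? = l[(k+1) % l.length]? := by
  rcases Nat.lt_or_ge (k+1) l.length with h | h
  · rw [List.head?_append_of_ne_nil]
    · rw [List.head?_drop, Nat.mod_eq_of_lt h]
    · simp only [ne_eq, List.drop_eq_nil_iff]; omega
  · have h0 : (k+1) % l.length = 0 := by
      have : k + 1 = l.length := by omega
      rw [this]; simp
    rw [h0, List.drop_eq_nil_of_le (by omega), List.nil_append, List.head?_take]
    rw [if_neg (by omega), List.head?_eq_getElem?]

lemma pair_getElem {l : List q.E} {k : ℕ} (hk : k < l.length) {x y : q.E}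
    (hx : l[k]? = some x) (hy : l[(k+1) % l.length]? = some y) :
    (q.cycPairs l)[k]? = some (x, y) := by
  rw [Quiv.cycPairs, List.getElem?_zip_eq_some]
  exact ⟨hx, by rw [List.getElem?_rotate hk]; exact hy⟩

lemma occ_inj {S : List q.E →₀ K} (hGood : q.Good K S)
    (hNoLoops : ∀ e : q.E, q.s e ≠ q.t e) {a : q.E}
    {l₁ l₂ : List q.E} {k₁ k₂ : ℕ}
    (h₁ : l₁ ∈ S.support) (h₂ : l₂ ∈ S.support)
    (hk₁ : k₁ < l₁.length) (hk₂ : k₂ < l₂.length)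
    (ha₁ : l₁[k₁]? = some a) (ha₂ : l₂[k₂]? = some a)
    (hhead : (l₁.drop (k₁+1) ++ l₁.take k₁).head? = (l₂.drop (k₂+1) ++ l₂.take k₂).head?) :
    l₁ = l₂ ∧ k₁ = k₂ := by
  classical
  have n₁ := two_le_length_of_cycle hNoLoops (hGood.1 _ h₁)
  have n₂ := two_le_length_of_cycle hNoLoops (hGood.1 _ h₂)
  rw [head?_cder n₁ hk₁, head?_cder n₂ hk₂] at hhead
  have hm₁ : (k₁+1) % l₁.length < l₁.length := Nat.mod_lt _ (by omega)
  obtain ⟨b, hb₁⟩ : ∃ b, l₁[(k₁+1) % l₁.length]? = some b :=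
    ⟨_, List.getElem?_eq_getElem hm₁⟩
  have hb₂ : l₂[(k₂+1) % l₂.length]? = some b := by rw [← hhead]; exact hb₁
  have hp₁ := pair_getElem (q := q) hk₁ ha₁ hb₁
  have hp₂ := pair_getElem (q := q) hk₂ ha₂ hb₂
  have hlen₁ : (q.cycPairs l₁).length = l₁.length := by
    simp [Quiv.cycPairs]
  have hPairBound := hGood.2.2 (a, b)
  by_contra hcon
  rcases eq_or_ne l₁ l₂ with rfl | hne
  · have hkne : k₁ ≠ k₂ := fun h => hcon ⟨rfl, h⟩
    have hdup : List.Duplicate (a, b) (q.cycPairs l₁) := by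
      rw [List.duplicate_iff_exists_distinct_get]
      have e₁ : (q.cycPairs l₁).get ⟨k₁, by omega⟩ = (a, b) := by
        have hlt : k₁ < (q.cycPairs l₁).length := by omega
        have := List.getElem?_eq_getElem hlt
        rw [hp₁] at this
        simpa using this.symm
      have e₂ : (q.cycPairs l₁).get ⟨k₂, by omega⟩ = (a, b) := by
        have hlt : k₂ < (q.cycPairs l₁).length := by omega
        have := List.getElem?_eq_getElem hlt
        rw [hp₂] at this
        simpa using this.symm
      rcases Nat.lt_or_ge k₁ k₂ with h | h
      · exact ⟨⟨k₁, by omega⟩, ⟨k₂, by omega⟩, by simpa using h, e₁.symm, e₂.symm⟩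
      · exact ⟨⟨k₂, by omega⟩, ⟨k₁, by omega⟩, by simp; omega, e₂.symm, e₁.symm⟩
    have h2c : 2 ≤ (q.cycPairs l₁).count (a, b) := by
      have t0 : LawfulBEq q.E := inferInstance
      have h := List.duplicate_iff_two_le_count.mp hdup
      refine h.trans (le_of_eq ?_)
      exact @count_beq_congr _ _ _ (@instLawfulBEq _ _) inferInstance _ _
    have hle : (q.cycPairs l₁).count (a, b) ≤ ∑ l ∈ S.support, (q.cycPairs l).count (a, b) :=
      Finset.single_le_sum (f := fun l => (q.cycPairs l).count (a, b))
        (fun _ _ => Nat.zero_le _) h₁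
    omega
  · have c₁ : 0 < (q.cycPairs l₁).count (a, b) :=
      List.count_pos_iff.mpr (List.mem_of_getElem? hp₁)
    have c₂ : 0 < (q.cycPairs l₂).count (a, b) :=
      List.count_pos_iff.mpr (List.mem_of_getElem? hp₂)
    have hsub : ({l₁, l₂} : Finset (List q.E)) ⊆ S.support := by
      intro x hx
      simp only [Finset.mem_insert, Finset.mem_singleton] at hx
      rcases hx with rfl | rfl <;> assumption
    have hle : (q.cycPairs l₁).count (a, b) + (q.cycPairs l₂).count (a, b)
        ≤ ∑ l ∈ S.support, (q.cycPairs l).count (a, b) := by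
      have h := Finset.sum_le_sum_of_subset (f := fun l => (q.cycPairs l).count (a, b)) hsub
      rwa [Finset.sum_pair hne] at h
    omega

end Aux

open Quiv in
theorem good_potential_cyclic_derivative_distinct_heads
    (q : Quiv) (K : Type) [Field K] (S : List q.E →₀ K)
    (hNoLoops : ∀ e : q.E, q.s e ≠ q.t e)
    (hNoTwoCycles : ∀ e f : q.E, ¬(q.s e = q.t f ∧ q.s f = q.t e))
    (hGood : q.Good K S) (a : q.E) :
    2 ≤ (q.cycDer K a S).support.card ∧
    (∀ l₁ ∈ (q.cycDer K a S).support, ∀ l₂ ∈ (q.cycDer K a S).support,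
      l₁ ≠ l₂ → l₁.head? ≠ l₂.head?) := by
  classical
  set T : Finset ((_ : List q.E) × ℕ) :=
    S.support.sigma (fun l => (Finset.range l.length).filter fun k => l[k]? = some a)
    with hT
  have hmemT : ∀ σ : (_ : List q.E) × ℕ, σ ∈ T ↔
      σ.1 ∈ S.support ∧ σ.2 < σ.1.length ∧ σ.1[σ.2]? = some a := by
    intro σ
    simp [hT, Finset.mem_sigma, Finset.mem_filter, Finset.mem_range, and_assoc]
  -- the cyclic derivative as a sum of single terms over occurrences
  have hrep : q.cycDer K a S =
      ∑ σ ∈ T, Finsupp.single (σ.1.drop (σ.2+1) ++ σ.1.take σ.2) (S σ.1) := by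
    rw [Quiv.cycDer, Finsupp.sum, hT, Finset.sum_sigma]
    refine Finset.sum_congr rfl fun l hl => ?_
    rw [Quiv.cycDerList, Finset.smul_sum, Finset.sum_filter]
    refine Finset.sum_congr rfl fun k hk => ?_
    split_ifs with h
    · rw [Finsupp.smul_single, smul_eq_mul, mul_one]
    · rw [smul_zero]
  -- injectivity of the path map on occurrences
  have hinj : ∀ σ₁ ∈ T, ∀ σ₂ ∈ T,
      (σ₁.1.drop (σ₁.2+1) ++ σ₁.1.take σ₁.2).head? =
        (σ₂.1.drop (σ₂.2+1) ++ σ₂.1.take σ₂.2).head? → σ₁ = σ₂ := by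
    rintro ⟨l₁, k₁⟩ h1 ⟨l₂, k₂⟩ h2 hh
    obtain ⟨m1, hk1, ha1⟩ := (hmemT _).mp h1
    obtain ⟨m2, hk2, ha2⟩ := (hmemT _).mp h2
    obtain ⟨rfl, rfl⟩ := occ_inj hGood hNoLoops m1 m2 hk1 hk2 ha1 ha2 hh
    rfl
  have hinj' : ∀ σ₁ ∈ T, ∀ σ₂ ∈ T,
      (σ₁.1.drop (σ₁.2+1) ++ σ₁.1.take σ₁.2) = (σ₂.1.drop (σ₂.2+1) ++ σ₂.1.take σ₂.2) →
      σ₁ = σ₂ := fun σ₁ h1 σ₂ h2 h => hinj σ₁ h1 σ₂ h2 (by rw [h])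
  -- support of the single terms
  have hss : ∀ σ ∈ T, (Finsupp.single (σ.1.drop (σ.2+1) ++ σ.1.take σ.2) (S σ.1)).support
      = {σ.1.drop (σ.2+1) ++ σ.1.take σ.2} := by
    intro σ hσ
    exact Finsupp.support_single_ne_zero _
      (Finsupp.mem_support_iff.mp ((hmemT σ).mp hσ).1)
  set g : ((_ : List q.E) × ℕ) → (List q.E →₀ K) := fun σ =>
    if σ ∈ T then Finsupp.single (σ.1.drop (σ.2+1) ++ σ.1.take σ.2) (S σ.1) else 0 with hg
  have hgT : ∀ σ ∈ T, g σ = Finsupp.single (σ.1.drop (σ.2+1) ++ σ.1.take σ.2) (S σ.1) :=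
    fun σ h => if_pos h
  have hgsupp : ∀ σ ∈ T, (g σ).support = {σ.1.drop (σ.2+1) ++ σ.1.take σ.2} := by
    intro σ h
    rw [hgT σ h]
    exact hss σ h
  have hrep' : q.cycDer K a S = ∑ σ ∈ T, g σ := by
    rw [hrep]
    exact Finset.sum_congr rfl fun σ h => (hgT σ h).symm
  have hdisj : ∀ σ₁ σ₂ : ((_ : List q.E) × ℕ), σ₁ ≠ σ₂ →
      Disjoint (g σ₁).support (g σ₂).support := by
    intro σ₁ σ₂ hne
    by_cases h1 : σ₁ ∈ T
    · by_cases h2 : σ₂ ∈ T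
      · rw [Finset.disjoint_left]
        intro x hx1 hx2
        rw [hgsupp σ₁ h1, Finset.mem_singleton] at hx1
        rw [hgsupp σ₂ h2, Finset.mem_singleton] at hx2
        exact hne (hinj' σ₁ h1 σ₂ h2 (hx1 ▸ hx2))
      · rw [hg]; simp [h2]
    · rw [hg]; simp [h1]
  have hsupp : (q.cycDer K a S).support =
      T.image (fun σ => σ.1.drop (σ.2+1) ++ σ.1.take σ.2) := by
    rw [hrep', Finsupp.support_sum_eq_biUnion T hdisj]
    refine Finset.ext fun x => ?_
    simp only [Finset.mem_biUnion, Finset.mem_image]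
    constructor
    · rintro ⟨σ, hσ, hx⟩
      rw [hgsupp σ hσ, Finset.mem_singleton] at hx
      exact ⟨σ, hσ, hx.symm⟩
    · rintro ⟨σ, hσ, hx⟩
      exact ⟨σ, hσ, by rw [hgsupp σ hσ, Finset.mem_singleton, hx]⟩
  constructor
  · -- cardinality
    rw [hsupp, Finset.card_image_of_injOn fun σ₁ h1 σ₂ h2 h => hinj' σ₁ h1 σ₂ h2 h]
    rw [hT, Finset.card_sigma]
    calc 2 ≤ ∑ l ∈ S.support, l.count a := hGood.2.1 a
    _ = ∑ l ∈ S.support,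
        ((Finset.range l.length).filter fun k => l[k]? = some a).card :=
      Finset.sum_congr rfl fun l _ => (count_filter_range l a).symm
  · -- distinct heads
    intro l₁ hl₁ l₂ hl₂ hne
    rw [hsupp, Finset.mem_image] at hl₁ hl₂
    obtain ⟨σ₁, h1, rfl⟩ := hl₁
    obtain ⟨σ₂, h2, rfl⟩ := hl₂
    intro hh
    exact hne (by rw [hinj σ₁ h1 σ₂ h2 hh])
end

section
/- In the endomorphism algebra of the tilting complex T^k of a quiver with good potential, the relation corresponding to the dual arrow β* of an outgoing arrow β : k → i holds: the composition Σ_j [β α_j] ∘ α_j* is zero, where α_j* : T_k → T_j are the projections and [β α_j] : T_j → T_i are the compositions β α_j. -/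
namespace Quiv

variable (K : Type) [Field K] (q : Quiv) [Fintype q.V]

/-- The defining relations of the path algebra `KQ` as a quotient of the free algebra on
the vertices and arrows of `Q`: the vertices become a complete set of orthogonal
idempotents, and each arrow `e` satisfies `e = e_{t(e)} · e · e_{s(e)}`. -/
inductive PathRel : FreeAlgebra K (q.V ⊕ q.E) → FreeAlgebra K (q.V ⊕ q.E) → Prop
  | vtxIdem (i : q.V) : PathRel (FreeAlgebra.ι K (Sum.inl i) * FreeAlgebra.ι K (Sum.inl i))
      (FreeAlgebra.ι K (Sum.inl i))
  | vtxOrtho (i j : q.V) : i ≠ j →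
      PathRel (FreeAlgebra.ι K (Sum.inl i) * FreeAlgebra.ι K (Sum.inl j)) 0
  | vtxSum : PathRel (∑ i : q.V, FreeAlgebra.ι K (Sum.inl i)) 1
  | tgtMul (e : q.E) : PathRel
      (FreeAlgebra.ι K (Sum.inl (q.t e)) * FreeAlgebra.ι K (Sum.inr e))
      (FreeAlgebra.ι K (Sum.inr e))
  | srcMul (e : q.E) : PathRel
      (FreeAlgebra.ι K (Sum.inr e) * FreeAlgebra.ι K (Sum.inl (q.s e)))
      (FreeAlgebra.ι K (Sum.inr e))
  | tgtZero (e : q.E) (i : q.V) : i ≠ q.t e → PathRel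
      (FreeAlgebra.ι K (Sum.inl i) * FreeAlgebra.ι K (Sum.inr e)) 0
  | srcZero (e : q.E) (i : q.V) : i ≠ q.s e → PathRel
      (FreeAlgebra.ι K (Sum.inr e) * FreeAlgebra.ι K (Sum.inl i)) 0

/-- The path algebra `KQ` of the quiver `Q` over the field `K`. -/
def PathAlg := RingQuot (PathRel K q)

noncomputable instance : Ring (PathAlg K q) :=
  inferInstanceAs (Ring (RingQuot (PathRel K q)))

noncomputable instance : Algebra K (PathAlg K q) :=
  inferInstanceAs (Algebra K (RingQuot (PathRel K q)))

/-- The idempotent of the path algebra corresponding to a vertex. -/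
noncomputable def vtx (i : q.V) : PathAlg K q :=
  RingQuot.mkAlgHom K (PathRel K q) (FreeAlgebra.ι K (Sum.inl i))

/-- The element of the path algebra corresponding to an arrow. -/
noncomputable def arr (e : q.E) : PathAlg K q :=
  RingQuot.mkAlgHom K (PathRel K q) (FreeAlgebra.ι K (Sum.inr e))

/-- The element of the path algebra corresponding to a path `a₁ ⋯ aₙ`
(product of its arrows). -/
noncomputable def pathEl : List q.E → PathAlg K q
  | [] => 1
  | e :: l => arr K q e * pathEl l

/-- The element of the path algebra corresponding to a linear combination of paths. -/
noncomputable def el (S : List q.E →₀ K) : PathAlg K q :=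
  S.sum fun l c => c • pathEl K q l

/-- The relations of the Jacobian algebra: all cyclic derivatives of the potential `S`
are set to zero. -/
inductive JacobRel (S : List q.E →₀ K) : PathAlg K q → PathAlg K q → Prop
  | deriv (x : q.E) : JacobRel S (el K q (q.cycDer K x S)) 0

/-- The Jacobian algebra `J(Q,S) = KQ / ⟨∂S/∂x : x ∈ Q₁⟩` of a quiver with potential. -/
def Jacob (S : List q.E →₀ K) := RingQuot (JacobRel K q S)

noncomputable instance (S : List q.E →₀ K) : Ring (Jacob K q S) :=
  inferInstanceAs (Ring (RingQuot (JacobRel K q S)))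

noncomputable instance (S : List q.E →₀ K) : Algebra K (Jacob K q S) :=
  inferInstanceAs (Algebra K (RingQuot (JacobRel K q S)))

/-- The projection from the path algebra onto the Jacobian algebra. -/
noncomputable def jmk (S : List q.E →₀ K) : PathAlg K q →ₐ[K] Jacob K q S :=
  RingQuot.mkAlgHom K (JacobRel K q S)

end Quiv

open CategoryTheory CategoryTheory.Limits ZeroObject

/-- The two-term cochain complex `0 → X → Y → 0` with `X` in degree `0` and `Y` in
degree `1`, and differential `f`. -/
noncomputable def twoTerm {C : Type _} [Category C] [HasZeroMorphisms C] [HasZeroObject C]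
    (X Y : C) (f : X ⟶ Y) : CochainComplex C ℤ where
  X n := if n = 0 then X else if n = 1 then Y else 0
  d i j :=
    if h : i = 0 ∧ j = 1 then
      eqToHom (by rw [h.1]; simp) ≫ f ≫ eqToHom (by rw [h.2]; simp)
    else 0
  shape i j hij := by
    rw [dif_neg]
    rintro ⟨rfl, rfl⟩
    exact hij (by simp [ComplexShape.up])
  d_comp_d' i j k hij hjk := by
    by_cases h : i = 0 ∧ j = 1
    · obtain ⟨h0, h1⟩ := h
      subst h0; subst h1
      rw [dif_pos ⟨rfl, rfl⟩, dif_neg (fun hc => one_ne_zero hc.1), comp_zero]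
    · rw [dif_neg h, zero_comp]

namespace Quiv

variable (K : Type) [Field K] (q : _root_.Quiv) [Fintype q.V] [Fintype q.E]
  [DecidableEq q.V] [DecidableEq q.E] (S : List q.E →₀ K)

/-- The image of a vertex idempotent in the Jacobian algebra. -/
noncomputable def vtxJ (i : q.V) : Jacob K q S := jmk K q S (vtx K q i)

/-- The image of an arrow in the Jacobian algebra. -/
noncomputable def arrJ (e : q.E) : Jacob K q S := jmk K q S (arr K q e)

/-- The image of a path in the Jacobian algebra. -/
noncomputable def pathJ (l : List q.E) : Jacob K q S := jmk K q S (pathEl K q l)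

/-- The indecomposable projective right module `Pᵢ = eᵢ R` over the Jacobian algebra
`R = J(Q,S)`, realized as the `Rᵐᵒᵖ`-submodule of `R` spanned by the idempotent `eᵢ`
(right modules are modules over the opposite algebra). -/
noncomputable def P (i : q.V) : Submodule (Jacob K q S)ᵐᵒᵖ (Jacob K q S) :=
  Submodule.span (Jacob K q S)ᵐᵒᵖ {vtxJ K q S i}

/-- Left multiplication by an element of the Jacobian algebra, as an endomorphism of
the regular right module. -/
noncomputable def leftMul (x : Jacob K q S) :
    Jacob K q S →ₗ[(Jacob K q S)ᵐᵒᵖ] Jacob K q S where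
  toFun y := x * y
  map_add' a b := mul_add x a b
  map_smul' r y := by
    simp only [MulOpposite.smul_eq_mul_unop, RingHom.id_apply, mul_assoc]

/-- The set of arrows into a given vertex `k`. -/
def In (k : q.V) : Type := {e : q.E // q.t e = k}

instance (k : q.V) : Fintype (q.In k) :=
  inferInstanceAs (Fintype {e : q.E // q.t e = k})

instance (k : q.V) : DecidableEq (q.In k) :=
  inferInstanceAs (DecidableEq {e : q.E // q.t e = k})

lemma vtxJ_mul_arrJ (e : q.E) :
    vtxJ K q S (q.t e) * arrJ K q S e = arrJ K q S e := by
  have h : RingQuot.mkAlgHom K (PathRel K q)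
        (FreeAlgebra.ι K (Sum.inl (q.t e)) * FreeAlgebra.ι K (Sum.inr e))
      = RingQuot.mkAlgHom K (PathRel K q) (FreeAlgebra.ι K (Sum.inr e)) :=
    RingQuot.mkAlgHom_rel K (PathRel.tgtMul e)
  rw [map_mul] at h
  rw [vtxJ, arrJ, ← map_mul]
  exact congrArg (jmk K q S) h

lemma arrJ_mul_vtxJ (e : q.E) :
    arrJ K q S e * vtxJ K q S (q.s e) = arrJ K q S e := by
  have h : RingQuot.mkAlgHom K (PathRel K q)
        (FreeAlgebra.ι K (Sum.inr e) * FreeAlgebra.ι K (Sum.inl (q.s e)))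
      = RingQuot.mkAlgHom K (PathRel K q) (FreeAlgebra.ι K (Sum.inr e)) :=
    RingQuot.mkAlgHom_rel K (PathRel.srcMul e)
  rw [map_mul] at h
  rw [arrJ, vtxJ, ← map_mul]
  exact congrArg (jmk K q S) h

lemma arrJ_mem (e : q.E) (y : Jacob K q S) (hy : y ∈ P K q S (q.s e)) :
    arrJ K q S e * y ∈ P K q S (q.t e) := by
  rcases Submodule.mem_span_singleton.1 hy with ⟨c, rfl⟩
  refine Submodule.mem_span_singleton.2 ⟨MulOpposite.op (arrJ K q S e * c.unop), ?_⟩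
  simp only [MulOpposite.smul_eq_mul_unop, MulOpposite.unop_op]
  rw [← mul_assoc, vtxJ_mul_arrJ, ← mul_assoc, arrJ_mul_vtxJ]

/-- Left multiplication by an arrow `e : j → k`, as a map of right modules
`P_j → P_k` (the component of the presentation map of `T_k`). -/
noncomputable def arrMul (k : q.V) (e : q.In k) :
    ↥(P K q S (q.s e.1)) →ₗ[(Jacob K q S)ᵐᵒᵖ] ↥(P K q S k) :=
  (leftMul K q S (arrJ K q S e.1)).restrict (p := P K q S (q.s e.1)) (q := P K q S k)
    (fun y hy => by
      have := arrJ_mem K q S e.1 y hy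
      rwa [e.2] at this)

/-- The direct sum `⊕_{j → k} P_j` over all arrows into `k`. -/
noncomputable abbrev DS (k : q.V) :=
  DirectSum (q.In k) fun e => ↥(P K q S (q.s e.1))

/-- The presentation map `(αⱼ)ⱼ : ⊕_{j → k} P_j → P_k` whose components are left
multiplication by the arrows into `k`. -/
noncomputable def pres (k : q.V) :
    DS K q S k →ₗ[(Jacob K q S)ᵐᵒᵖ] ↥(P K q S k) :=
  DirectSum.toModule _ _ _ fun e => arrMul K q S k e

/-- The two-term complex `T_k = (⊕_{j → k} P_j → P_k)` of right modules over the
Jacobian algebra (with `⊕_{j → k} P_j` in degree `0` and `P_k` in degree `1`). -/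
noncomputable def Tk (k : q.V) : CochainComplex (ModuleCat (Jacob K q S)ᵐᵒᵖ) ℤ :=
  twoTerm (ModuleCat.of (Jacob K q S)ᵐᵒᵖ (DS K q S k))
    (ModuleCat.of (Jacob K q S)ᵐᵒᵖ (↥(P K q S k)))
    (ModuleCat.ofHom (pres K q S k))

/-- The stalk complex of a right module placed in degree `0`. -/
noncomputable def stalk (M : Type) [AddCommGroup M] [Module (Jacob K q S)ᵐᵒᵖ M] :
    CochainComplex (ModuleCat (Jacob K q S)ᵐᵒᵖ) ℤ :=
  (HomologicalComplex.single (ModuleCat (Jacob K q S)ᵐᵒᵖ) (ComplexShape.up ℤ) 0).obj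
    (ModuleCat.of (Jacob K q S)ᵐᵒᵖ M)

/-- The canonical functor from complexes to the homotopy category. -/
noncomputable def ho (X : CochainComplex (ModuleCat (Jacob K q S)ᵐᵒᵖ) ℤ) :
    HomotopyCategory (ModuleCat (Jacob K q S)ᵐᵒᵖ) (ComplexShape.up ℤ) :=
  (HomotopyCategory.quotient _ _).obj X

end Quiv

namespace Quiv

variable (K : Type) [Field K] (q : _root_.Quiv) [Fintype q.V] [Fintype q.E]
  [DecidableEq q.V] [DecidableEq q.E] (S : List q.E →₀ K)

lemma Tk_d_to_deg_zero (k : q.V) (i : ℤ) : (Tk K q S k).d i 0 = 0 := by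
  simp [Tk, twoTerm]
  rfl

/-- The dual arrow `αⱼ* : T_k → T_j` of an arrow `αⱼ : j → k`, given in degree `0` by the
projection `⊕_{j→k} P_j → P_j`. -/
noncomputable def alStar (k : q.V) (α : q.In k) :
    Tk K q S k ⟶ stalk K q S ↥(P K q S (q.s α.1)) :=
  HomologicalComplex.mkHomToSingle
    ((eqToHom (by rfl) :
        (Tk K q S k).X 0 ⟶ ModuleCat.of (Jacob K q S)ᵐᵒᵖ (DS K q S k)) ≫
      ModuleCat.ofHom (DirectSum.component (Jacob K q S)ᵐᵒᵖ (q.In k) _ α))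
    (fun i hi => by rw [Tk_d_to_deg_zero, Limits.zero_comp])

/-- Left multiplication by the path `β αⱼ` (for `β : k → i` and `αⱼ : j → k`) as a map of
right modules `P_j → P_i`. -/
noncomputable def mesonMul (k : q.V) (β : q.E) (hβ : q.s β = k) (α : q.In k) :
    ↥(P K q S (q.s α.1)) →ₗ[(Jacob K q S)ᵐᵒᵖ] ↥(P K q S (q.t β)) :=
  (leftMul K q S (arrJ K q S β * arrJ K q S α.1)).restrict (fun y hy => by
    show arrJ K q S β * arrJ K q S α.1 * y ∈ P K q S (q.t β)
    rw [mul_assoc]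
    have h1 := arrJ_mem K q S α.1 y hy
    have hP : P K q S (q.t α.1) = P K q S (q.s β) := by rw [α.2, hβ]
    exact arrJ_mem K q S β _ (hP ▸ h1))

/-- The mesonic arrow `[β αⱼ] : T_j → T_i`, as a map of stalk complexes. -/
noncomputable def meson (k : q.V) (β : q.E) (hβ : q.s β = k) (α : q.In k) :
    stalk K q S ↥(P K q S (q.s α.1)) ⟶ stalk K q S ↥(P K q S (q.t β)) :=
  (HomologicalComplex.single (ModuleCat (Jacob K q S)ᵐᵒᵖ) (ComplexShape.up ℤ) 0).map
    (ModuleCat.ofHom (mesonMul K q S k β hβ α))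

end Quiv

namespace Quiv

variable (K : Type) [Field K] (q : _root_.Quiv) [Fintype q.V] [Fintype q.E]
  [DecidableEq q.V] [DecidableEq q.E] (S : List q.E →₀ K)

/-- Left multiplication by `β` as a map `P_k → P_{t β}`. -/
noncomputable def betaMul (k : q.V) (β : q.E) (hβ : q.s β = k) :
    ↥(P K q S k) →ₗ[(Jacob K q S)ᵐᵒᵖ] ↥(P K q S (q.t β)) :=
  (leftMul K q S (arrJ K q S β)).restrict (p := P K q S k) (q := P K q S (q.t β))
    (fun y hy => arrJ_mem K q S β y (by rw [hβ]; exact hy))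

lemma betaMul_comp_pres (k : q.V) (β : q.E) (hβ : q.s β = k) :
    (betaMul K q S k β hβ).comp (pres K q S k) =
      ∑ α : q.In k, (mesonMul K q S k β hβ α).comp
        (DirectSum.component (Jacob K q S)ᵐᵒᵖ (q.In k)
          (fun e => ↥(P K q S (q.s e.1))) α) := by
  apply DirectSum.linearMap_ext
  intro α
  ext y
  simp only [LinearMap.comp_apply, pres, DirectSum.toModule_lof, LinearMap.coe_sum,
    Finset.sum_apply]
  rw [Finset.sum_eq_single α]
  · rw [DirectSum.component.lof_self]
    show (arrJ K q S β) * ((arrJ K q S α.1) * (y : Jacob K q S)) =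
      (arrJ K q S β * arrJ K q S α.1) * (y : Jacob K q S)
    rw [mul_assoc]
  · intro b _ hb
    rw [DirectSum.component.of]
    rw [dif_neg (by exact fun h => hb h.symm)]
    simp
  · intro hα
    exact absurd (Finset.mem_univ α) hα

lemma Tk_d01 (k : q.V) : (Tk K q S k).d 0 1 =
    (ModuleCat.ofHom (pres K q S k) :
      ModuleCat.of (Jacob K q S)ᵐᵒᵖ (DS K q S k) ⟶
        ModuleCat.of (Jacob K q S)ᵐᵒᵖ ↥(P K q S k)) := by
  dsimp only [Tk, twoTerm]
  rw [dif_pos ⟨rfl, rfl⟩]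
  simp

open CategoryTheory in
/-- The homotopy maps. -/
noncomputable def homot (k : q.V) (β : q.E) (hβ : q.s β = k) :
    ∀ i j, (ComplexShape.up ℤ).Rel j i →
      ((Tk K q S k).X i ⟶ (stalk K q S ↥(P K q S (q.t β))).X j) :=
  fun i j _ =>
    if hij : i = 1 ∧ j = 0 then
      eqToHom (by rw [hij.1]; rfl) ≫
        ModuleCat.ofHom (betaMul K q S k β hβ) ≫
        (HomologicalComplex.singleObjXSelf (ComplexShape.up ℤ) 0
          (ModuleCat.of (Jacob K q S)ᵐᵒᵖ ↥(P K q S (q.t β)))).inv ≫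
        eqToHom (by rw [hij.2]; rfl)
    else 0

end Quiv

lemma hom_sum_f {ι' V : Type*} [CategoryTheory.Category V] [CategoryTheory.Preadditive V]
    {ι : Type*} {c : ComplexShape ι} {C D : HomologicalComplex V c}
    (s : Finset ι') (F : ι' → (C ⟶ D)) (n : ι) :
    (∑ a ∈ s, F a).f n = ∑ a ∈ s, (F a).f n :=
  map_sum (HomologicalComplex.Hom.fAddMonoidHom n) F s

open Quiv in
/-- In the endomorphism algebra of the tilting complex `T^k` of a quiver
with good potential, the relation corresponding to the dual arrow `β*` of an outgoing arrow
`β : k → i` holds: the composition `Σⱼ [β αⱼ] ∘ αⱼ*` is zero in the homotopy category, where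
`αⱼ* : T_k → T_j` are the projections and `[β αⱼ] : T_j → T_i` are the compositions
`β αⱼ`. -/
theorem meson_comp_dual_arrows_sum_zero
    (K : Type) [Field K] (q : _root_.Quiv) [Fintype q.V] [Fintype q.E]
    [DecidableEq q.V] [DecidableEq q.E] (S : List q.E →₀ K)
    (hNoLoops : ∀ e : q.E, q.s e ≠ q.t e)
    (hNoTwoCycles : ∀ e f : q.E, ¬(q.s e = q.t f ∧ q.s f = q.t e))
    (hGood : q.Good K S)
    (k : q.V) (β : q.E) (hβ : q.s β = k) :
    Nonempty (Homotopy
      (∑ α : q.In k, alStar K q S k α ≫ meson K q S k β hβ α)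
      (0 : Tk K q S k ⟶ stalk K q S ↥(P K q S (q.t β)))) := by
  classical
  refine ⟨(Homotopy.ofEq ?_).trans (Homotopy.nullHomotopy' (homot K q S k β hβ))⟩
  apply HomologicalComplex.hom_ext
  intro n
  by_cases hn : n = 0
  · subst hn
    rw [Homotopy.nullHomotopicMap'_f
      (show (ComplexShape.up ℤ).Rel (-1) 0 by simp)
      (show (ComplexShape.up ℤ).Rel 0 1 by simp) (homot K q S k β hβ)]
    have h2 : homot K q S k β hβ 0 (-1) (by simp) = 0 := by
      rw [homot, dif_neg]; rintro ⟨h0, _⟩; exact absurd h0 (by norm_num)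
    rw [h2, Limits.zero_comp, add_zero]
    have h1 : homot K q S k β hβ 1 0 (by simp) =
        eqToHom (rfl) ≫ ModuleCat.ofHom (betaMul K q S k β hβ) ≫
          (HomologicalComplex.singleObjXSelf (ComplexShape.up ℤ) 0
            (ModuleCat.of (Jacob K q S)ᵐᵒᵖ ↥(P K q S (q.t β)))).inv ≫
          eqToHom (rfl) := by
      rw [homot, dif_pos ⟨rfl, rfl⟩]
      rfl
    rw [h1, eqToHom_refl, eqToHom_refl, Category.id_comp, Category.comp_id]
    rw [hom_sum_f]
    have hterm : ∀ α : q.In k,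
        (alStar K q S k α ≫ meson K q S k β hβ α).f 0 =
          (ModuleCat.ofHom ((mesonMul K q S k β hβ α).comp
              (DirectSum.component (Jacob K q S)ᵐᵒᵖ (q.In k)
                (fun e => ↥(P K q S (q.s e.1))) α))) ≫
            (HomologicalComplex.singleObjXSelf (ComplexShape.up ℤ) 0
              (ModuleCat.of (Jacob K q S)ᵐᵒᵖ ↥(P K q S (q.t β)))).inv := by
      intro α
      rw [HomologicalComplex.comp_f]
      rw [alStar, HomologicalComplex.mkHomToSingle_f]
      rw [meson, HomologicalComplex.single_map_f_self]
      simp only [eqToHom_refl, Category.id_comp, Category.assoc,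
        Iso.inv_hom_id_assoc]
      rfl
    rw [Finset.sum_congr rfl (fun α _ => hterm α)]
    erw [← Preadditive.sum_comp, Tk_d01, ← Category.assoc]
    congr 1
    apply ModuleCat.hom_ext
    simp only [ModuleCat.hom_sum, ModuleCat.hom_comp, ModuleCat.hom_ofHom]
    exact (betaMul_comp_pres K q S k β hβ).symm
  · apply (HomologicalComplex.isZero_single_obj_X
      (ComplexShape.up ℤ) 0 (ModuleCat.of (Jacob K q S)ᵐᵒᵖ ↥(P K q S (q.t β))) n hn).eq_of_tgt
end
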